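/- Let d ≥ 1, β > 0, σ > 0, let x ∼ N(0, I_d) and ε ∼ N(0, σ²) be independent, let Δ ∈ ℝ^d with Δ ≠ 0, and let v ∈ ℝ^d with ‖v‖₂ = 1. Writing a = ⟨Δ, v⟩/‖Δ‖₂ and ρ = (1+βσ²)/(1+β(σ²+‖Δ‖₂²)), one has E[ ⟨x, v⟩² · exp(−(β/2)(⟨Δ, x⟩ + ε)²) ] = (1/√(1+βσ²))·( a²·ρ^{3/2} + (1 − a²)·ρ^{1/2} ). In particular, the infimum of this expectation over unit vectors v equals (1+βσ²)/(1+βσ²+β‖Δ‖₂²)^{3/2}. -/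

import Mathlib

open Real MeasureTheory

open scoped RealInnerProductSpace

section Aux
open Filter

private lemma integral_comp_neg_real' (f : ℝ → ℝ) : ∫ x : ℝ, f (-x) = ∫ x : ℝ, f x := by
  have A : MeasurableEmbedding fun x : ℝ => -x := (Homeomorph.neg ℝ).measurableEmbedding
  have h := A.integral_map (μ := volume) (g := f)
  rw [Measure.map_neg_eq_self (volume : Measure ℝ)] at h
  exact h.symm

private lemma integral_odd_gaussian' (b : ℝ) :
    ∫ x : ℝ, x * Real.exp (-b * x ^ 2) = 0 := by
  have h := integral_comp_neg_real' (fun x => x * Real.exp (-b * x ^ 2))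
  simp only [neg_sq, neg_mul] at h ⊢
  rw [integral_neg] at h
  linarith

private lemma tendsto_mul_exp_neg_mul_sq_atTop' {b : ℝ} (hb : 0 < b) :
    Tendsto (fun x : ℝ => x * Real.exp (-b * x ^ 2)) atTop (nhds 0) := by
  have h1 := rpow_mul_exp_neg_mul_sq_isLittleO_exp_neg hb 1
  simp only [Real.rpow_one] at h1
  have h2 : Tendsto (fun x : ℝ => Real.exp (-(1/2 : ℝ) * x)) atTop (nhds 0) := by
    apply Real.tendsto_exp_atBot.comp
    exact (tendsto_id (α := ℝ)).const_mul_atTop_of_neg (by norm_num)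
  exact h1.trans_tendsto h2

private lemma tendsto_mul_exp_neg_mul_sq_atBot' {b : ℝ} (hb : 0 < b) :
    Tendsto (fun x : ℝ => x * Real.exp (-b * x ^ 2)) atBot (nhds 0) := by
  have h := ((tendsto_mul_exp_neg_mul_sq_atTop' hb).neg).comp tendsto_neg_atBot_atTop
  simp only [Function.comp_def, neg_sq, neg_mul, neg_neg, neg_zero] at h ⊢
  exact h

private lemma integral_sq_mul_exp_neg_mul_sq' {b : ℝ} (hb : 0 < b) :
    ∫ x : ℝ, x ^ 2 * Real.exp (-b * x ^ 2) = Real.sqrt (π / b) / (2 * b) := by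
  have hb2 : (2 : ℝ) * b ≠ 0 := by positivity
  have A : ∀ x : ℝ, HasDerivAt (fun x : ℝ => -(2*b)⁻¹ * (x * Real.exp (-b * x^2)))
      (x^2 * Real.exp (-b * x^2) - (2*b)⁻¹ * Real.exp (-b * x^2)) x := by
    intro x
    have h1 : HasDerivAt (fun x : ℝ => Real.exp (-b * x ^ 2))
        (Real.exp (-b * x ^ 2) * (-b * (2 * x ^ 1))) x :=
      ((hasDerivAt_pow 2 x).const_mul (-b)).exp
    have h2 := (hasDerivAt_id x).fun_mul h1
    have h3 := h2.const_mul (-(2*b)⁻¹)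
    refine h3.congr_deriv ?_
    simp only [id, pow_one]; field_simp; ring
  have hi1 : Integrable (fun x : ℝ => x ^ 2 * Real.exp (-b * x ^ 2)) := by
    have := integrable_rpow_mul_exp_neg_mul_sq hb (s := 2) (by norm_num)
    simpa [Real.rpow_two] using this
  have hi2 : Integrable (fun x : ℝ => (2*b)⁻¹ * Real.exp (-b * x ^ 2)) :=
    (integrable_exp_neg_mul_sq hb).const_mul _
  have hint : Integrable (fun x : ℝ =>
      x^2 * Real.exp (-b * x^2) - (2*b)⁻¹ * Real.exp (-b * x^2)) := hi1.sub hi2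
  have htop : Tendsto (fun x : ℝ => -(2*b)⁻¹ * (x * Real.exp (-b * x^2))) atTop (nhds 0) := by
    have := (tendsto_mul_exp_neg_mul_sq_atTop' hb).const_mul (-(2*b)⁻¹)
    simpa using this
  have hbot : Tendsto (fun x : ℝ => -(2*b)⁻¹ * (x * Real.exp (-b * x^2))) atBot (nhds 0) := by
    have := (tendsto_mul_exp_neg_mul_sq_atBot' hb).const_mul (-(2*b)⁻¹)
    simpa using this
  have key := integral_of_hasDerivAt_of_tendsto A hint hbot htop
  rw [sub_zero] at key
  have hsub := integral_sub hi1 hi2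
  rw [hsub, integral_const_mul, integral_gaussian] at key
  have : ∫ x : ℝ, x ^ 2 * Real.exp (-b * x ^ 2) = (2*b)⁻¹ * Real.sqrt (π / b) := by linarith
  rw [this]; ring

private lemma integrable_sq_mul_exp_neg_mul_sq' {b : ℝ} (hb : 0 < b) :
    Integrable (fun x : ℝ => x ^ 2 * Real.exp (-b * x ^ 2)) := by
  have := integrable_rpow_mul_exp_neg_mul_sq hb (s := 2) (by norm_num)
  simpa [Real.rpow_two] using this

private lemma rpow_neg_half_eq' {x : ℝ} (hx : 0 ≤ x) : x ^ (-(1:ℝ)/2) = 1 / Real.sqrt x := by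
  rw [show (-(1:ℝ)/2) = -(1/2) by ring, Real.rpow_neg hx, Real.sqrt_eq_rpow]
  exact (one_div _).symm

private lemma inner_gauss' (β σ : ℝ) (hβ : 0 < β) (hσ : 0 < σ) (c m : ℝ) :
    (2 * π * σ ^ 2) ^ (-(1:ℝ)/2) *
      ∫ ε : ℝ, c * Real.exp (-(β/2) * (m + ε)^2) * Real.exp (-ε^2 / (2*σ^2))
    = c * (1 / Real.sqrt (1 + β*σ^2)) * Real.exp (-(β/(1+β*σ^2)/2) * m^2) := by
  have hσ0 : σ ≠ 0 := ne_of_gt hσ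
  have hs : (0:ℝ) < 1 + β*σ^2 := by positivity
  have hs' : (1:ℝ) + β*σ^2 ≠ 0 := ne_of_gt hs
  have hpt : ∀ ε : ℝ, c * Real.exp (-(β/2) * (m + ε)^2) * Real.exp (-ε^2 / (2*σ^2))
      = (c * Real.exp (-(β/(1+β*σ^2)/2) * m^2)) *
          Real.exp (-((1 + β*σ^2) / (2*σ^2)) * (ε + β*m*σ^2/(1+β*σ^2))^2) := by
    intro ε
    rw [mul_assoc, ← Real.exp_add, mul_assoc, ← Real.exp_add]
    congr 2
    field_simp
    ring
  simp only [hpt]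
  rw [integral_const_mul,
    integral_add_right_eq_self (fun ε => Real.exp (-((1 + β*σ^2) / (2*σ^2)) * ε^2))
      (β*m*σ^2/(1+β*σ^2)),
    integral_gaussian]
  have h2πσ : (0:ℝ) < 2 * π * σ ^ 2 := by positivity
  have hconst : (2 * π * σ ^ 2) ^ (-(1:ℝ)/2) * Real.sqrt (π / ((1 + β*σ^2) / (2*σ^2)))
      = 1 / Real.sqrt (1 + β*σ^2) := by
    rw [rpow_neg_half_eq' h2πσ.le,
      show π / ((1 + β*σ^2) / (2*σ^2)) = (2 * π * σ^2) / (1 + β*σ^2) by field_simp,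
      Real.sqrt_div h2πσ.le]
    have : Real.sqrt (2 * π * σ^2) ≠ 0 := ne_of_gt (Real.sqrt_pos.mpr h2πσ)
    field_simp
  calc (2 * π * σ ^ 2) ^ (-(1:ℝ)/2) *
        (c * Real.exp (-(β/(1+β*σ^2)/2) * m^2) * Real.sqrt (π / ((1 + β*σ^2) / (2*σ^2))))
      = ((2 * π * σ ^ 2) ^ (-(1:ℝ)/2) * Real.sqrt (π / ((1 + β*σ^2) / (2*σ^2)))) *
          (c * Real.exp (-(β/(1+β*σ^2)/2) * m^2)) := by ring
    _ = _ := by rw [hconst]; ring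

end Aux
private lemma outer_gauss {d : ℕ} (hd : 1 ≤ d) {κ : ℝ} (hκ : 0 < κ)
    (u v : EuclideanSpace ℝ (Fin d)) (hu : ‖u‖ = 1) (hv : ‖v‖ = 1) :
    (2 * π) ^ (-(d:ℝ)/2) * ∫ x : EuclideanSpace ℝ (Fin d),
        Real.exp (-‖x‖^2/2) * (⟪x, v⟫^2 * Real.exp (-(κ/2) * ⟪u, x⟫^2))
    = (1/Real.sqrt (1+κ)) * (⟪u,v⟫^2 / (1+κ) + (1 - ⟪u,v⟫^2)) := by
  haveI : NeZero d := ⟨by omega⟩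
  have hON : Orthonormal ℝ (({0} : Set (Fin d)).restrict (fun _ : Fin d => u)) := by
    constructor
    · intro i; exact hu
    · intro i j hij
      exact absurd (Subtype.ext ((Set.mem_singleton_iff.mp i.2).trans
        (Set.mem_singleton_iff.mp j.2).symm)) hij
  obtain ⟨b, hb⟩ := hON.exists_orthonormalBasis_extension_of_card_eq (by simp)
  have hb0 : b 0 = u := hb 0 rfl
  have hru : b.repr u = EuclideanSpace.single 0 1 := by
    rw [← hb0]; exact b.repr_self 0
  set c : Fin d → ℝ := fun i => b.repr v i with hc
  have hcnorm : ∑ i, c i * c i = 1 := by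
    have h1 : ⟪(b.repr v : EuclideanSpace ℝ (Fin d)), b.repr v⟫ = 1 := by
      rw [real_inner_self_eq_norm_sq, LinearIsometryEquiv.norm_map, hv]; norm_num
    rw [PiLp.inner_apply] at h1
    simp only [RCLike.inner_apply, conj_trivial] at h1
    exact h1
  have hc0 : c 0 = ⟪u, v⟫ := by
    have h1 : ⟪b.repr u, b.repr v⟫ = ⟪u, v⟫ := b.repr.inner_map_map u v
    rw [hru, EuclideanSpace.inner_single_left] at h1
    simpa using h1
  have hinner : ∀ y : EuclideanSpace ℝ (Fin d), ⟪b.repr.symm y, v⟫ = ∑ i, y i * c i := by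
    intro y
    have h1 := b.repr.inner_map_map (b.repr.symm y) v
    rw [LinearIsometryEquiv.apply_symm_apply] at h1
    rw [← h1, PiLp.inner_apply]
    simp only [RCLike.inner_apply, conj_trivial]
    exact Finset.sum_congr rfl (fun i _ => mul_comm _ _)
  have hinneru : ∀ y : EuclideanSpace ℝ (Fin d), ⟪u, b.repr.symm y⟫ = y 0 := by
    intro y
    have h1 := b.repr.inner_map_map u (b.repr.symm y)
    rw [LinearIsometryEquiv.apply_symm_apply, hru, EuclideanSpace.inner_single_left] at h1
    simpa using h1.symm
  have hnorm : ∀ y : EuclideanSpace ℝ (Fin d), ‖b.repr.symm y‖^2 = ∑ i, (y i)^2 := by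
    intro y
    rw [LinearIsometryEquiv.norm_map, ← real_inner_self_eq_norm_sq, PiLp.inner_apply]
    simp only [RCLike.inner_apply, conj_trivial, pow_two]
  -- per-coordinate data
  set p : Fin d → ℝ := fun k => if k = 0 then (1+κ)/2 else 1/2 with hp
  have hppos : ∀ k, 0 < p k := by
    intro k; by_cases h : k = 0 <;> simp [hp, h] <;> positivity
  set f : Fin d → Fin d → Fin d → ℝ → ℝ :=
    fun i j k t => ((if k = i then t else 1) * (if k = j then t else 1)) *
      Real.exp (-(p k) * t^2) with hf
  -- pointwise identity
  have hsum : ∀ y : Fin d → ℝ, ∑ k, -(p k) * (y k)^2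
      = -(∑ k, (y k)^2)/2 - (κ/2) * (y 0)^2 := by
    intro y
    have h1 : ∀ k, -(p k) * (y k)^2
        = -(y k)^2/2 - (if k = 0 then (κ/2) * (y k)^2 else 0) := by
      intro k; by_cases h : k = 0 <;> simp [hp, h] <;> ring
    rw [Finset.sum_congr rfl (fun k _ => h1 k), Finset.sum_sub_distrib,
      Finset.sum_ite_eq' Finset.univ (0 : Fin d) (fun k => (κ/2) * (y k)^2)]
    simp [neg_div, Finset.sum_div, Finset.sum_neg_distrib]
  have hprod : ∀ (y : Fin d → ℝ) (i j : Fin d), (∏ k, f i j k (y k))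
      = (y i * y j) * Real.exp (∑ k, -(p k) * (y k)^2) := by
    intro y i j
    rw [Real.exp_sum]
    simp only [hf]
    rw [Finset.prod_mul_distrib, Finset.prod_mul_distrib,
      Finset.prod_ite_eq' Finset.univ i (fun k => y k),
      Finset.prod_ite_eq' Finset.univ j (fun k => y k)]
    simp
  have hpt : ∀ y : EuclideanSpace ℝ (Fin d),
      Real.exp (-‖b.repr.symm y‖^2/2) * (⟪b.repr.symm y, v⟫^2 *
        Real.exp (-(κ/2) * ⟪u, b.repr.symm y⟫^2))
      = ∑ i, ∑ j, (c i * c j) * ∏ k, f i j k (y k) := by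
    intro y
    rw [hnorm, hinner, hinneru]
    have h2 : (∑ i, y i * c i)^2 = ∑ i, ∑ j, (y i * c i) * (y j * c j) := by
      rw [pow_two, Finset.sum_mul_sum]
    rw [h2]
    rw [Finset.sum_mul, Finset.mul_sum]
    refine Finset.sum_congr rfl (fun i _ => ?_)
    rw [Finset.sum_mul, Finset.mul_sum]
    refine Finset.sum_congr rfl (fun j _ => ?_)
    rw [hprod y i j, hsum,
      show (-∑ k, (y k)^2)/2 - κ/2 * (y 0)^2 = (-∑ k, (y k)^2)/2 + -(κ/2) * (y 0)^2 by ring,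
      Real.exp_add]
    ring
  -- integrability of coordinate factors
  have hfi : ∀ i j k, Integrable (f i j k) := by
    intro i j k
    by_cases h1 : k = i <;> by_cases h2 : k = j
    · have : f i j k = fun t : ℝ => t ^ 2 * Real.exp (-(p k) * t^2) := by
        funext t; simp only [hf]; rw [if_pos h1, if_pos h2, ← pow_two]
      rw [this]; exact integrable_sq_mul_exp_neg_mul_sq' (hppos k)
    · have : f i j k = fun t : ℝ => t * Real.exp (-(p k) * t^2) := by
        funext t; simp only [hf]; rw [if_pos h1, if_neg h2, mul_one]
      rw [this]; exact integrable_mul_exp_neg_mul_sq (hppos k)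
    · have : f i j k = fun t : ℝ => t * Real.exp (-(p k) * t^2) := by
        funext t; simp only [hf]; rw [if_neg h1, if_pos h2, one_mul]
      rw [this]; exact integrable_mul_exp_neg_mul_sq (hppos k)
    · have : f i j k = fun t : ℝ => Real.exp (-(p k) * t^2) := by
        funext t; simp only [hf]; rw [if_neg h1, if_neg h2, one_mul, one_mul]
      rw [this]; exact integrable_exp_neg_mul_sq (hppos k)
  have hint : ∀ i j, Integrable (fun z : Fin d → ℝ => ∏ k, f i j k (z k)) :=
    fun i j => Integrable.fintype_prod (fun k => hfi i j k)
  -- the x-integral in coordinates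
  have hx : (∫ x : EuclideanSpace ℝ (Fin d),
        Real.exp (-‖x‖^2/2) * (⟪x, v⟫^2 * Real.exp (-(κ/2) * ⟪u, x⟫^2)))
      = ∑ i, ∑ j, (c i * c j) * ∏ k, ∫ t : ℝ, f i j k t := by
    calc (∫ x : EuclideanSpace ℝ (Fin d),
          Real.exp (-‖x‖^2/2) * (⟪x, v⟫^2 * Real.exp (-(κ/2) * ⟪u, x⟫^2)))
        = ∫ y : EuclideanSpace ℝ (Fin d),
            Real.exp (-‖b.repr.symm y‖^2/2) * (⟪b.repr.symm y, v⟫^2 *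
              Real.exp (-(κ/2) * ⟪u, b.repr.symm y⟫^2)) :=
          ((b.measurePreserving_repr_symm).integral_comp
            (b.repr.symm.toHomeomorph.measurableEmbedding) _).symm
      _ = ∫ y : EuclideanSpace ℝ (Fin d), ∑ i, ∑ j, (c i * c j) * ∏ k, f i j k (y k) := by
          exact integral_congr_ae (Filter.Eventually.of_forall hpt)
      _ = ∫ z : Fin d → ℝ, ∑ i, ∑ j, (c i * c j) * ∏ k, f i j k (z k) :=
          ((MeasurePreserving.symm (MeasurableEquiv.toLp 2 (Fin d → ℝ)).symm
              (EuclideanSpace.volume_preserving_symm_measurableEquiv_toLp (Fin d))).integral_comp'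
            (fun y : EuclideanSpace ℝ (Fin d) =>
              ∑ i, ∑ j, (c i * c j) * ∏ k, f i j k (y k))).symm
      _ = ∑ i, ∑ j, (c i * c j) * ∫ z : Fin d → ℝ, ∏ k, f i j k (z k) := by
          rw [integral_finset_sum _ (fun i _ => integrable_finset_sum _
            (fun j _ => ((hint i j).const_mul _)))]
          exact Finset.sum_congr rfl (fun i _ => by
            rw [integral_finset_sum _ (fun j _ => ((hint i j).const_mul _))]
            exact Finset.sum_congr rfl (fun j _ => integral_const_mul _ _))
      _ = ∑ i, ∑ j, (c i * c j) * ∏ k, ∫ t : ℝ, f i j k t := by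
          refine Finset.sum_congr rfl (fun i _ => Finset.sum_congr rfl (fun j _ => ?_))
          rw [integral_fintype_prod_volume_eq_prod (f i j)]
  -- off-diagonal terms vanish
  have hIodd : ∀ i j, i ≠ j → (∫ t : ℝ, f i j i t) = 0 := by
    intro i j hij
    have h1 : (fun t : ℝ => f i j i t) = fun t : ℝ => t * Real.exp (-(p i) * t^2) := by
      funext t; simp only [hf]; simp [hij]
    rw [h1, integral_odd_gaussian' _]
  have hdiag : ∀ i k, (∫ t : ℝ, f i i k t)
      = Real.sqrt (π / p k) * (if k = i then (2 * p k)⁻¹ else 1) := by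
    intro i k
    by_cases h : k = i
    · subst h
      have h1 : (fun t : ℝ => f k k k t) = fun t : ℝ => t ^ 2 * Real.exp (-(p k) * t^2) := by
        funext t; simp only [hf]; simp [pow_two]
      rw [h1, integral_sq_mul_exp_neg_mul_sq' (hppos k), if_pos rfl, div_eq_mul_inv]
    · have h1 : (fun t : ℝ => f i i k t) = fun t : ℝ => Real.exp (-(p k) * t^2) := by
        funext t; simp [hf, h]
      rw [h1, integral_gaussian, if_neg h, mul_one]
  have hx2 : (∑ i, ∑ j, (c i * c j) * ∏ k, ∫ t : ℝ, f i j k t)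
      = (∏ k, Real.sqrt (π / p k)) * ∑ i, (c i * c i) * (2 * p i)⁻¹ := by
    rw [Finset.mul_sum]
    refine Finset.sum_congr rfl (fun i _ => ?_)
    rw [Finset.sum_eq_single_of_mem i (Finset.mem_univ i) (fun j _ hji => by
      rw [Finset.prod_eq_zero (Finset.mem_univ i) (hIodd i j (Ne.symm hji)), mul_zero])]
    have h2 : ∀ k, (∫ t : ℝ, f i i k t)
        = Real.sqrt (π / p k) * (if k = i then (2 * p k)⁻¹ else 1) := hdiag i
    rw [Finset.prod_congr rfl (fun k _ => h2 k), Finset.prod_mul_distrib,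
      Finset.prod_ite_eq' Finset.univ i (fun k => (2 * p k)⁻¹)]
    simp only [Finset.mem_univ, if_pos]
    ring
  have hsum2 : (∑ i, (c i * c i) * (2 * p i)⁻¹) = 1 + (⟪u,v⟫ * ⟪u,v⟫) * ((1+κ)⁻¹ - 1) := by
    have h1 : ∀ i, (c i * c i) * (2 * p i)⁻¹
        = c i * c i + (if i = 0 then (c i * c i) * ((1+κ)⁻¹ - 1) else 0) := by
      intro i
      by_cases h : i = 0
      · subst h
        have hpi : p 0 = (1+κ)/2 := by simp [hp]
        rw [hpi, if_pos rfl, show (2:ℝ) * ((1+κ)/2) = 1+κ by ring]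
        ring
      · have hpi : p i = 1/2 := by simp [hp, h]
        rw [hpi, if_neg h]
        norm_num
    rw [Finset.sum_congr rfl (fun i _ => h1 i), Finset.sum_add_distrib, hcnorm,
      Finset.sum_ite_eq' Finset.univ (0 : Fin d) (fun i => (c i * c i) * ((1+κ)⁻¹ - 1))]
    simp only [Finset.mem_univ, if_pos, hc0]
  have h1κ : (0:ℝ) < 1 + κ := by positivity
  have hSprod : (∏ k, Real.sqrt (π / p k))
      = Real.sqrt (2*π) ^ d * (1/Real.sqrt (1+κ)) := by
    have h1 : ∀ k : Fin d, Real.sqrt (π / p k)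
        = Real.sqrt (2*π) * (if k = 0 then 1/Real.sqrt (1+κ) else 1) := by
      intro k
      by_cases h : k = 0
      · subst h
        have hpi : p 0 = (1+κ)/2 := by simp [hp]
        rw [hpi, if_pos rfl, show π / ((1+κ)/2) = (2*π) / (1+κ) by field_simp,
          Real.sqrt_div (by positivity)]
        ring
      · have hpi : p k = 1/2 := by simp [hp, h]
        rw [hpi, if_neg h, show π / ((1:ℝ)/2) = 2*π by ring, mul_one]
    rw [Finset.prod_congr rfl (fun k _ => h1 k), Finset.prod_mul_distrib,
      Finset.prod_const, Finset.prod_ite_eq' Finset.univ (0 : Fin d)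
        (fun _ => 1/Real.sqrt (1+κ))]
    simp [Finset.card_univ]
  have hpow : (2 * π) ^ (-(d:ℝ)/2) * Real.sqrt (2*π) ^ d = 1 := by
    have h2π : (0:ℝ) < 2 * π := by positivity
    rw [Real.sqrt_eq_rpow, ← Real.rpow_natCast ((2*π) ^ ((1:ℝ)/2)) d,
      ← Real.rpow_mul h2π.le, ← Real.rpow_add h2π,
      show -(d:ℝ)/2 + 1/2*(d:ℝ) = 0 by ring, Real.rpow_zero]
  rw [hx, hx2, hsum2, hSprod]
  calc (2 * π) ^ (-(d:ℝ)/2) * (Real.sqrt (2*π) ^ d * (1/Real.sqrt (1+κ)) *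
        (1 + (⟪u,v⟫ * ⟪u,v⟫) * ((1+κ)⁻¹ - 1)))
      = ((2 * π) ^ (-(d:ℝ)/2) * Real.sqrt (2*π) ^ d) * ((1/Real.sqrt (1+κ)) *
        (1 + (⟪u,v⟫ * ⟪u,v⟫) * ((1+κ)⁻¹ - 1))) := by ring
    _ = (1/Real.sqrt (1+κ)) * (⟪u,v⟫^2 / (1+κ) + (1 - ⟪u,v⟫^2)) := by
        rw [hpow, one_mul]
        have : (1+κ) ≠ 0 := ne_of_gt h1κ
        field_simp
        ring


/-- Gaussian expectation identity for the LWSC constant of robust least squares regression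
with Gaussian label noise of variance `σ²`: for independent `x ∼ N(0, I_d)`, `ε ∼ N(0, σ²)`,
nonzero `Δ` and a unit vector `v` with `a = ⟨Δ,v⟩/‖Δ‖`, `ρ = (1+βσ²)/(1+β(σ²+‖Δ‖²))`,
`E[⟨x,v⟩²·exp(−(β/2)(⟨Δ,x⟩+ε)²)] = (1/√(1+βσ²))·(a²ρ^{3/2} + (1−a²)ρ^{1/2})`, and the
infimum over unit vectors equals `(1+βσ²)/(1+βσ²+β‖Δ‖²)^{3/2}`. -/
theorem stmt8
    {d : ℕ} (hd : 1 ≤ d) (β σ : ℝ) (hβ : 0 < β) (hσ : 0 < σ)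
    (Δ : EuclideanSpace ℝ (Fin d)) (hΔ : Δ ≠ 0) :
    (∀ v : EuclideanSpace ℝ (Fin d), ‖v‖ = 1 →
      (2 * π) ^ (-(d : ℝ) / 2) *
        ∫ x : EuclideanSpace ℝ (Fin d),
          (Real.exp (-‖x‖ ^ 2 / 2) * ((2 * π * σ ^ 2) ^ (-(1 : ℝ) / 2) *
            ∫ ε : ℝ, ⟪x, v⟫ ^ 2 * Real.exp (-(β / 2) * (⟪Δ, x⟫ + ε) ^ 2) *
              Real.exp (-ε ^ 2 / (2 * σ ^ 2))))
      = (1 / Real.sqrt (1 + β * σ ^ 2)) *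
          ((⟪Δ, v⟫ / ‖Δ‖) ^ 2 *
              ((1 + β * σ ^ 2) / (1 + β * (σ ^ 2 + ‖Δ‖ ^ 2))) ^ ((3 : ℝ) / 2)
            + (1 - (⟪Δ, v⟫ / ‖Δ‖) ^ 2) *
              ((1 + β * σ ^ 2) / (1 + β * (σ ^ 2 + ‖Δ‖ ^ 2))) ^ ((1 : ℝ) / 2))) ∧
    (⨅ v : {v : EuclideanSpace ℝ (Fin d) // ‖v‖ = 1},
      (2 * π) ^ (-(d : ℝ) / 2) *
        ∫ x : EuclideanSpace ℝ (Fin d),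
          (Real.exp (-‖x‖ ^ 2 / 2) * ((2 * π * σ ^ 2) ^ (-(1 : ℝ) / 2) *
            ∫ ε : ℝ, ⟪x, (v : EuclideanSpace ℝ (Fin d))⟫ ^ 2 *
              Real.exp (-(β / 2) * (⟪Δ, x⟫ + ε) ^ 2) *
              Real.exp (-ε ^ 2 / (2 * σ ^ 2)))))
      = (1 + β * σ ^ 2) / (1 + β * σ ^ 2 + β * ‖Δ‖ ^ 2) ^ ((3 : ℝ) / 2) := by
  have hΔn : (0:ℝ) < ‖Δ‖ := norm_pos_iff.mpr hΔ
  set u : EuclideanSpace ℝ (Fin d) := ‖Δ‖⁻¹ • Δ with hudef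
  have hu : ‖u‖ = 1 := norm_smul_inv_norm hΔ
  have hs : (0:ℝ) < 1 + β*σ^2 := by positivity
  have hss : Real.sqrt (1 + β*σ^2) ≠ 0 := ne_of_gt (Real.sqrt_pos.mpr hs)
  set κ : ℝ := β * ‖Δ‖^2 / (1 + β*σ^2) with hκdef
  have hκpos : 0 < κ := div_pos (mul_pos hβ (pow_pos hΔn 2)) hs
  have h1κ : (0:ℝ) < 1 + κ := by positivity
  have hD : (0:ℝ) < 1 + β*(σ^2+‖Δ‖^2) := by positivity
  have hbase : (0:ℝ) < (1 + β * σ ^ 2) / (1 + β * (σ ^ 2 + ‖Δ‖ ^ 2)) := div_pos hs hD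
  have hρ : (1 + β * σ ^ 2) / (1 + β * (σ ^ 2 + ‖Δ‖ ^ 2)) = (1+κ)⁻¹ := by
    have h2 : 1 + β * ‖Δ‖^2 / (1 + β*σ^2) = (1 + β*σ^2 + β*‖Δ‖^2)/(1 + β*σ^2) := by
      field_simp
    rw [hκdef, h2, inv_div, show 1 + β*(σ^2+‖Δ‖^2) = 1 + β*σ^2 + β*‖Δ‖^2 by ring]
  have hρhalf : ((1 + β * σ ^ 2) / (1 + β * (σ ^ 2 + ‖Δ‖ ^ 2))) ^ ((1:ℝ)/2)
      = 1 / Real.sqrt (1+κ) := by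
    rw [hρ, ← Real.sqrt_eq_rpow, Real.sqrt_inv, one_div]
  have hρ32 : ((1 + β * σ ^ 2) / (1 + β * (σ ^ 2 + ‖Δ‖ ^ 2))) ^ ((3:ℝ)/2)
      = (1+κ)⁻¹ * (1 / Real.sqrt (1+κ)) := by
    rw [show (3:ℝ)/2 = 1 + 1/2 by norm_num, Real.rpow_add hbase, Real.rpow_one, hρhalf, hρ]
  -- Part 1
  have h1 : ∀ v : EuclideanSpace ℝ (Fin d), ‖v‖ = 1 →
      (2 * π) ^ (-(d : ℝ) / 2) *
        ∫ x : EuclideanSpace ℝ (Fin d),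
          (Real.exp (-‖x‖ ^ 2 / 2) * ((2 * π * σ ^ 2) ^ (-(1 : ℝ) / 2) *
            ∫ ε : ℝ, ⟪x, v⟫ ^ 2 * Real.exp (-(β / 2) * (⟪Δ, x⟫ + ε) ^ 2) *
              Real.exp (-ε ^ 2 / (2 * σ ^ 2))))
      = (1 / Real.sqrt (1 + β * σ ^ 2)) *
          ((⟪Δ, v⟫ / ‖Δ‖) ^ 2 *
              ((1 + β * σ ^ 2) / (1 + β * (σ ^ 2 + ‖Δ‖ ^ 2))) ^ ((3 : ℝ) / 2)
            + (1 - (⟪Δ, v⟫ / ‖Δ‖) ^ 2) *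
              ((1 + β * σ ^ 2) / (1 + β * (σ ^ 2 + ‖Δ‖ ^ 2))) ^ ((1 : ℝ) / 2)) := by
    intro v hv
    have hin : ∀ x : EuclideanSpace ℝ (Fin d),
        (Real.exp (-‖x‖ ^ 2 / 2) * ((2 * π * σ ^ 2) ^ (-(1 : ℝ) / 2) *
          ∫ ε : ℝ, ⟪x, v⟫ ^ 2 * Real.exp (-(β / 2) * (⟪Δ, x⟫ + ε) ^ 2) *
            Real.exp (-ε ^ 2 / (2 * σ ^ 2))))
        = (1 / Real.sqrt (1 + β * σ ^ 2)) *
            (Real.exp (-‖x‖^2/2) * (⟪x, v⟫^2 * Real.exp (-(κ/2) * ⟪u, x⟫^2))) := by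
      intro x
      rw [inner_gauss' β σ hβ hσ (⟪x, v⟫^2) (⟪Δ, x⟫)]
      have hip : ⟪Δ, x⟫ = ‖Δ‖ * ⟪u, x⟫ := by
        rw [hudef, real_inner_smul_left]
        field_simp
      have hexp : -(β/(1+β*σ^2)/2) * ⟪Δ, x⟫^2 = -(κ/2) * ⟪u, x⟫^2 := by
        rw [hip, hκdef]
        field_simp
      rw [hexp]
      ring
    rw [integral_congr_ae (Filter.Eventually.of_forall hin), integral_const_mul,
      show (2 * π) ^ (-(d:ℝ) / 2) * ((1 / Real.sqrt (1 + β * σ ^ 2)) *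
        ∫ x : EuclideanSpace ℝ (Fin d),
          Real.exp (-‖x‖^2/2) * (⟪x, v⟫^2 * Real.exp (-(κ/2) * ⟪u, x⟫^2)))
      = (1 / Real.sqrt (1 + β * σ ^ 2)) * ((2 * π) ^ (-(d:ℝ) / 2) *
        ∫ x : EuclideanSpace ℝ (Fin d),
          Real.exp (-‖x‖^2/2) * (⟪x, v⟫^2 * Real.exp (-(κ/2) * ⟪u, x⟫^2))) by ring,
      outer_gauss hd hκpos u v hu hv]
    have ha : ⟪u, v⟫ = ⟪Δ, v⟫ / ‖Δ‖ := by
      rw [hudef, real_inner_smul_left]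
      ring
    rw [hρ32, hρhalf, ← ha]
    ring
  refine ⟨h1, ?_⟩
  -- Part 2
  have hCX : (1 / Real.sqrt (1 + β * σ ^ 2)) *
      ((1 + β * σ ^ 2) / (1 + β * (σ ^ 2 + ‖Δ‖ ^ 2))) ^ ((3:ℝ)/2)
      = (1 + β * σ ^ 2) / (1 + β * σ ^ 2 + β * ‖Δ‖ ^ 2) ^ ((3 : ℝ) / 2) := by
    have hD' : (0:ℝ) < 1 + β * σ ^ 2 + β * ‖Δ‖ ^ 2 := by positivity
    rw [show 1 + β * (σ ^ 2 + ‖Δ‖ ^ 2) = 1 + β * σ ^ 2 + β * ‖Δ‖ ^ 2 by ring,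
      Real.div_rpow hs.le hD'.le,
      show ((3:ℝ)/2) = 1 + 1/2 by norm_num, Real.rpow_add hs, Real.rpow_one,
      ← Real.sqrt_eq_rpow]
    rw [Real.rpow_add hD', Real.rpow_one, ← Real.sqrt_eq_rpow]
    have hsD : Real.sqrt (1 + β * σ ^ 2 + β * ‖Δ‖ ^ 2) ≠ 0 :=
      ne_of_gt (Real.sqrt_pos.mpr hD')
    field_simp
  have hXY : ((1 + β * σ ^ 2) / (1 + β * (σ ^ 2 + ‖Δ‖ ^ 2))) ^ ((3:ℝ)/2)
      ≤ ((1 + β * σ ^ 2) / (1 + β * (σ ^ 2 + ‖Δ‖ ^ 2))) ^ ((1:ℝ)/2) := by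
    apply Real.rpow_le_rpow_of_exponent_ge hbase
    · rw [div_le_one hD]
      nlinarith [pow_pos hΔn 2]
    · norm_num
  have hX0 : (0:ℝ) ≤ ((1 + β * σ ^ 2) / (1 + β * (σ ^ 2 + ‖Δ‖ ^ 2))) ^ ((3:ℝ)/2) :=
    Real.rpow_nonneg hbase.le _
  have hC0 : (0:ℝ) ≤ 1 / Real.sqrt (1 + β * σ ^ 2) := by positivity
  have hbound : ∀ w : EuclideanSpace ℝ (Fin d), ‖w‖ = 1 →
      (1 + β * σ ^ 2) / (1 + β * σ ^ 2 + β * ‖Δ‖ ^ 2) ^ ((3 : ℝ) / 2)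
      ≤ (1 / Real.sqrt (1 + β * σ ^ 2)) *
          ((⟪Δ, w⟫ / ‖Δ‖) ^ 2 *
              ((1 + β * σ ^ 2) / (1 + β * (σ ^ 2 + ‖Δ‖ ^ 2))) ^ ((3 : ℝ) / 2)
            + (1 - (⟪Δ, w⟫ / ‖Δ‖) ^ 2) *
              ((1 + β * σ ^ 2) / (1 + β * (σ ^ 2 + ‖Δ‖ ^ 2))) ^ ((1 : ℝ) / 2)) := by
    intro w hw
    have ha1 : (⟪Δ, w⟫ / ‖Δ‖) ^ 2 ≤ 1 := by
      have h2 : |⟪Δ, w⟫| ≤ ‖Δ‖ := by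
        have := abs_real_inner_le_norm Δ w
        rwa [hw, mul_one] at this
      rw [div_pow, div_le_one (pow_pos hΔn 2), ← sq_abs]
      exact pow_le_pow_left₀ (abs_nonneg _) h2 2
    have ha0 : (0:ℝ) ≤ (⟪Δ, w⟫ / ‖Δ‖) ^ 2 := sq_nonneg _
    rw [← hCX]
    set X := ((1 + β * σ ^ 2) / (1 + β * (σ ^ 2 + ‖Δ‖ ^ 2))) ^ ((3:ℝ)/2)
    set Y := ((1 + β * σ ^ 2) / (1 + β * (σ ^ 2 + ‖Δ‖ ^ 2))) ^ ((1:ℝ)/2)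
    set a2 := (⟪Δ, w⟫ / ‖Δ‖) ^ 2
    have key : (1 / Real.sqrt (1 + β * σ ^ 2)) * (a2 * X + (1 - a2) * Y)
        = (1 / Real.sqrt (1 + β * σ ^ 2)) * X
          + (1 / Real.sqrt (1 + β * σ ^ 2)) * ((1 - a2) * (Y - X)) := by ring
    rw [key]
    have hnn : 0 ≤ (1 / Real.sqrt (1 + β * σ ^ 2)) * ((1 - a2) * (Y - X)) :=
      mul_nonneg hC0 (mul_nonneg (by linarith) (by linarith))
    linarith
  have hau : ⟪Δ, u⟫ / ‖Δ‖ = 1 := by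
    rw [hudef, real_inner_smul_right, real_inner_self_eq_norm_sq]
    field_simp
  haveI : Nonempty {v : EuclideanSpace ℝ (Fin d) // ‖v‖ = 1} := ⟨⟨u, hu⟩⟩
  apply le_antisymm
  · have hle := ciInf_le (f := fun w : {v : EuclideanSpace ℝ (Fin d) // ‖v‖ = 1} =>
      (2 * π) ^ (-(d : ℝ) / 2) *
        ∫ x : EuclideanSpace ℝ (Fin d),
          (Real.exp (-‖x‖ ^ 2 / 2) * ((2 * π * σ ^ 2) ^ (-(1 : ℝ) / 2) *
            ∫ ε : ℝ, ⟪x, (w : EuclideanSpace ℝ (Fin d))⟫ ^ 2 *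
              Real.exp (-(β / 2) * (⟪Δ, x⟫ + ε) ^ 2) *
              Real.exp (-ε ^ 2 / (2 * σ ^ 2)))))
      (by
        refine ⟨(1 + β * σ ^ 2) / (1 + β * σ ^ 2 + β * ‖Δ‖ ^ 2) ^ ((3 : ℝ) / 2), ?_⟩
        rintro y ⟨w, rfl⟩
        have hb2 := hbound w.1 w.2
        rw [← h1 w.1 w.2] at hb2
        exact hb2)
      ⟨u, hu⟩
    refine hle.trans (le_of_eq ?_)
    have heq := h1 u hu
    rw [hau] at heq
    rw [← hCX]
    refine heq.trans ?_
    norm_num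
  · apply le_ciInf
    intro w
    have hb2 := hbound w.1 w.2
    rw [← h1 w.1 w.2] at hb2
    exact hb2
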